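/- arXiv:2304.08198 — 4 statements merged into one kernel-verified Lean document; each statement's English description precedes it below -/
import Mathlib

section
/- Let Z be a nonempty finite index set, and for each p ∈ Z let ℓ_p and m_p be nonnegative integers. Let d₊, d₋ be integers satisfying d₊ + d₋ + Σ_{p∈Z} ℓ_p = 0, d₊ ≤ d₋, d₊ < 0 and d₋ < 0. For a real number c define χ_p(c) = min{ℓ_p, (m_p + 1)·c + ℓ_p/2}. Then there exists a unique real number c ≥ 0 such that d₊ + Σ_{p∈Z} χ_p(c) = 0, and for this c one also has d₋ + Σ_{p∈Z} (ℓ_p − χ_p(c)) = 0. -/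
open Finset

/-- Mochizuki's weight lemma: with `χ_p(c) = min (ℓ_p) ((m_p+1)·c + ℓ_p/2)`, under the
stability hypotheses there is a unique `c ≥ 0` with `d₊ + Σ_p χ_p(c) = 0`, and for this `c`
also `d₋ + Σ_p (ℓ_p − χ_p(c)) = 0`. -/
theorem exists_unique_weight_constant
    (Z : Type*) [Fintype Z] [Nonempty Z]
    (ℓ m : Z → ℕ) (dp dm : ℤ)
    (hsum : dp + dm + ∑ p, (ℓ p : ℤ) = 0)
    (hle : dp ≤ dm) (hdp : dp < 0) (hdm : dm < 0) :
    (∃! c : ℝ, 0 ≤ c ∧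
        (dp : ℝ) + ∑ p, min (ℓ p : ℝ) (((m p : ℝ) + 1) * c + (ℓ p : ℝ) / 2) = 0) ∧
    (∀ c : ℝ, 0 ≤ c →
        (dp : ℝ) + ∑ p, min (ℓ p : ℝ) (((m p : ℝ) + 1) * c + (ℓ p : ℝ) / 2) = 0 →
        (dm : ℝ) + ∑ p, ((ℓ p : ℝ) - min (ℓ p : ℝ) (((m p : ℝ) + 1) * c + (ℓ p : ℝ) / 2)) = 0) := by
  set g : ℝ → ℝ := fun c => ∑ p, min (ℓ p : ℝ) (((m p : ℝ) + 1) * c + (ℓ p : ℝ) / 2) with hg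
  set S : ℝ := ∑ p, (ℓ p : ℝ) with hS
  have hsumR : (dp : ℝ) + (dm : ℝ) + S = 0 := by
    rw [hS]; exact_mod_cast hsum
  have hdpR : (dp : ℝ) < 0 := by exact_mod_cast hdp
  have hdmR : (dm : ℝ) < 0 := by exact_mod_cast hdm
  have hleR : (dp : ℝ) ≤ (dm : ℝ) := by exact_mod_cast hle
  have hℓnn : ∀ p, (0:ℝ) ≤ (ℓ p : ℝ) := fun p => by positivity
  have hSle : ∀ p, (ℓ p : ℝ) ≤ S := fun p =>
    Finset.single_le_sum (fun i _ => hℓnn i) (mem_univ p)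
  have hSpos : 0 < S := by linarith
  -- continuity
  have hgcont : Continuous g := by
    apply continuous_finset_sum
    intro p _
    exact continuous_const.min ((continuous_const.mul continuous_id).add continuous_const)
  -- monotonicity
  have hmono : ∀ a b : ℝ, a ≤ b → g a ≤ g b := by
    intro a b hab
    apply Finset.sum_le_sum
    intro p _
    refine min_le_min le_rfl (add_le_add_left ?_ _)
    have : (0:ℝ) ≤ (m p : ℝ) + 1 := by positivity
    nlinarith
  -- values at endpoints
  have hg0 : g 0 = S / 2 := by
    rw [hg]
    simp only [mul_zero, zero_add]
    rw [Finset.sum_congr rfl fun p _ => min_eq_right (by linarith [hℓnn p])]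
    rw [hS, Finset.sum_div]
  have hgS : g S = S := by
    have key : ∀ p : Z, (ℓ p : ℝ) ≤ ((m p : ℝ) + 1) * S + (ℓ p : ℝ) / 2 := by
      intro p
      have h1 : (ℓ p : ℝ) ≤ S := hSle p
      nlinarith [hSpos, (by positivity : (0:ℝ) ≤ (m p : ℝ))]
    show (∑ p : Z, min (ℓ p : ℝ) (((m p : ℝ) + 1) * S + (ℓ p : ℝ) / 2)) = S
    rw [Finset.sum_congr rfl fun p _ => min_eq_left (key p)]
  have hf0 : (dp : ℝ) + g 0 ≤ 0 := by rw [hg0]; linarith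
  have hfS : 0 < (dp : ℝ) + g S := by rw [hgS]; linarith
  -- existence via IVT
  obtain ⟨c, hcmem, hceq⟩ : ∃ c ∈ Set.Icc (0:ℝ) S, (dp : ℝ) + g c = 0 := by
    have hivt := intermediate_value_Icc (le_of_lt hSpos)
      (Continuous.continuousOn (f := fun c => (dp:ℝ) + g c) (continuous_const.add hgcont))
    obtain ⟨c, hc, hceq⟩ := hivt ⟨hf0, le_of_lt hfS⟩
    exact ⟨c, hc, hceq⟩
  -- strict monotonicity near zeros
  have hstrict : ∀ a b : ℝ, 0 ≤ a → a < b → (dp : ℝ) + g b = 0 → (dp : ℝ) + g a < 0 := by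
    intro a b ha hab heqb
    have hgb : g b = -(dp : ℝ) := by linarith
    have hgblt : g b < S := by rw [hgb]; linarith
    -- some term is strictly below ℓ p
    have : ∃ p : Z, min (ℓ p : ℝ) (((m p : ℝ) + 1) * b + (ℓ p : ℝ) / 2) < (ℓ p : ℝ) := by
      by_contra h
      push_neg at h
      have : S ≤ g b := Finset.sum_le_sum fun p _ => h p
      linarith
    obtain ⟨q, hq⟩ := this
    have hlinq : ((m q : ℝ) + 1) * b + (ℓ q : ℝ) / 2 < (ℓ q : ℝ) := by
      rcases min_lt_iff.mp hq with h | h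
      · exact absurd h (lt_irrefl _)
      · exact h
    have hminq : min (ℓ q : ℝ) (((m q : ℝ) + 1) * b + (ℓ q : ℝ) / 2)
        = ((m q : ℝ) + 1) * b + (ℓ q : ℝ) / 2 := min_eq_right (le_of_lt hlinq)
    have hgab : g a < g b := by
      apply Finset.sum_lt_sum
      · intro p _
        refine min_le_min le_rfl (add_le_add_left ?_ _)
        have : (0:ℝ) ≤ (m p : ℝ) + 1 := by positivity
        nlinarith
      · refine ⟨q, mem_univ q, ?_⟩
        rw [hminq]
        have hmq : (0:ℝ) < (m q : ℝ) + 1 := by positivity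
        calc min (ℓ q : ℝ) (((m q : ℝ) + 1) * a + (ℓ q : ℝ) / 2)
            ≤ ((m q : ℝ) + 1) * a + (ℓ q : ℝ) / 2 := min_le_right _ _
          _ < ((m q : ℝ) + 1) * b + (ℓ q : ℝ) / 2 := by nlinarith
    linarith
  constructor
  · refine ⟨c, ⟨hcmem.1, hceq⟩, ?_⟩
    intro y ⟨hy0, hyeq⟩
    rcases lt_trichotomy y c with h | h | h
    · exact absurd hyeq (ne_of_lt (hstrict y c hy0 h hceq))
    · exact h
    · exact absurd hceq (ne_of_lt (hstrict c y hcmem.1 h hyeq))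
  · intro x hx0 hxeq
    rw [Finset.sum_sub_distrib, ← hS]
    linarith [hxeq]
end

section
/- Let ℂ[[t]] be the ring of formal power series over ℂ, let n ≥ 1 be an integer, let R = {f ∈ ℂ[[t]] : the coefficient of t^i in f vanishes for every odd i with i < 2n+1}, and for odd k with 1 ≤ k ≤ 2n+1 let M_k = R + R·t^k ⊆ ℂ[[t]]. Then the conductor C(M_k) = {u ∈ ℂ[[t]] : u·g ∈ M_k for every g ∈ ℂ[[t]]} equals the ideal of ℂ[[t]] generated by t^{k−1}, and the quotient ℂ[[t]] / C(M_k) is a ℂ-vector space of dimension k − 1. -/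
/-- `R = ℂ[[t², t^{2n+1}]]` as a ℂ-subspace of `ℂ[[t]]`. -/
noncomputable def A2nRing (n : ℕ) : Submodule ℂ (PowerSeries ℂ) where
  carrier := {f : PowerSeries ℂ | ∀ i : ℕ, Odd i → i < 2 * n + 1 → PowerSeries.coeff i f = 0}
  add_mem' := by
    intro a b ha hb
    simp only [Set.mem_setOf_eq] at *
    intro i hi hlt
    rw [map_add, ha i hi hlt, hb i hi hlt, add_zero]
  zero_mem' := by
    simp only [Set.mem_setOf_eq]
    intro i hi hlt
    simp
  smul_mem' := by
    intro c f hf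
    simp only [Set.mem_setOf_eq] at *
    intro i hi hlt
    rw [map_smul, hf i hi hlt, smul_zero]

/-- The module `M_k = R + R·t^k` as a ℂ-subspace of `ℂ[[t]]`. -/
noncomputable def A2nModule (n k : ℕ) : Submodule ℂ (PowerSeries ℂ) :=
  A2nRing n ⊔ (A2nRing n).map (LinearMap.mulRight ℂ (PowerSeries.X ^ k))

/-- The conductor `C(M_k) = {u ∈ ℂ[[t]] : u·g ∈ M_k for all g ∈ ℂ[[t]]}`
as a ℂ-subspace of `ℂ[[t]]`. -/
noncomputable def A2nConductor (n k : ℕ) : Submodule ℂ (PowerSeries ℂ) where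
  carrier := {u : PowerSeries ℂ | ∀ g : PowerSeries ℂ, u * g ∈ A2nModule n k}
  add_mem' := by
    intro a b ha hb
    simp only [Set.mem_setOf_eq] at *
    intro g
    rw [add_mul]
    exact (A2nModule n k).add_mem (ha g) (hb g)
  zero_mem' := by
    simp only [Set.mem_setOf_eq]
    intro g
    rw [zero_mul]
    exact (A2nModule n k).zero_mem
  smul_mem' := by
    intro c u hu
    simp only [Set.mem_setOf_eq] at *
    intro g
    rw [smul_mul_assoc]
    exact (A2nModule n k).smul_mem c (hu g)

open PowerSeries in
lemma mem_A2nModule_iff (n k : ℕ) (hodd : Odd k) (hk2 : k ≤ 2 * n + 1)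
    (f : PowerSeries ℂ) :
    f ∈ A2nModule n k ↔ ∀ i : ℕ, Odd i → i < k → PowerSeries.coeff i f = 0 := by
  constructor
  · intro hf i hi hik
    rcases Submodule.mem_sup.1 hf with ⟨a, ha, b', hb', rfl⟩
    rcases hb' with ⟨b, hb, rfl⟩
    have hik' : i < 2 * n + 1 := lt_of_lt_of_le hik hk2
    rw [LinearMap.mulRight_apply, map_add, ha i hi hik',
      PowerSeries.coeff_mul_X_pow', if_neg (by omega), add_zero]
  · intro hf
    set b : PowerSeries ℂ := PowerSeries.mk
      (fun j => if Even j then PowerSeries.coeff (k + j) f else 0) with hbdef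
    have hb : b ∈ A2nRing n := by
      intro j hj _
      simp [hbdef, PowerSeries.coeff_mk, Nat.not_even_iff_odd.2 hj]
    have ha : f - b * PowerSeries.X ^ k ∈ A2nRing n := by
      intro i hi hilt
      rw [map_sub, PowerSeries.coeff_mul_X_pow']
      by_cases hik : k ≤ i
      · have heven : Even (i - k) := Nat.Odd.sub_odd hi hodd
        rw [if_pos hik, hbdef, PowerSeries.coeff_mk, if_pos heven,
          Nat.add_sub_cancel' hik, sub_self]
      · rw [if_neg hik, hf i hi (by omega), sub_zero]
    have : f = (f - b * PowerSeries.X ^ k) + (b * PowerSeries.X ^ k) := by ring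
    rw [this]
    exact Submodule.mem_sup.2 ⟨_, ha, _, ⟨b, hb, rfl⟩, rfl⟩

lemma mem_A2nConductor_iff (n k : ℕ) (hodd : Odd k) (hk1 : 1 ≤ k)
    (hk2 : k ≤ 2 * n + 1) (u : PowerSeries ℂ) :
    u ∈ A2nConductor n k ↔ ∀ m : ℕ, m < k - 1 → PowerSeries.coeff m u = 0 := by
  have hkeven : Even (k - 1) := Nat.Odd.sub_odd hodd odd_one
  constructor
  · intro hu m hm
    by_cases hmodd : Odd m
    · have h1 := (mem_A2nModule_iff n k hodd hk2 _).1 (hu 1) m hmodd (by omega)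
      rwa [mul_one] at h1
    · have h1 := (mem_A2nModule_iff n k hodd hk2 _).1 (hu (PowerSeries.X ^ 1)) (m + 1)
        (Nat.odd_add_one.2 hmodd) (by omega)
      rwa [PowerSeries.coeff_mul_X_pow', if_pos (by omega), Nat.add_sub_cancel] at h1
  · intro hu g
    rw [mem_A2nModule_iff n k hodd hk2]
    intro i hi hik
    have hik' : i < k - 1 := by
      rcases Nat.lt_or_ge i (k - 1) with h | h
      · exact h
      · exfalso
        have : i = k - 1 := by omega
        exact (Nat.not_even_iff_odd.2 hi) (this ▸ hkeven)
    rw [PowerSeries.coeff_mul]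
    apply Finset.sum_eq_zero
    intro p hp
    have hp1 : p.1 ≤ i := by
      have := Finset.HasAntidiagonal.mem_antidiagonal.1 hp
      omega
    rw [hu p.1 (by omega), zero_mul]

noncomputable def coeffMap (m : ℕ) : PowerSeries ℂ →ₗ[ℂ] (Fin m → ℂ) :=
  LinearMap.pi (fun i => PowerSeries.coeff i)

lemma coeffMap_surjective (m : ℕ) : Function.Surjective (coeffMap m) := by
  intro v
  refine ⟨PowerSeries.mk (fun i => if h : i < m then v ⟨i, h⟩ else 0), ?_⟩
  funext i
  simp [coeffMap, PowerSeries.coeff_mk, i.isLt]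

/-- For odd `k`, `1 ≤ k ≤ 2n+1`, the conductor `C(M_k)` is the ideal of `ℂ[[t]]`
generated by `t^{k−1}`, and `ℂ[[t]] / C(M_k)` has ℂ-dimension `k − 1`. -/
theorem A2n_conductor_eq (n k : ℕ) (hn : 1 ≤ n) (hodd : Odd k) (hk1 : 1 ≤ k)
    (hk2 : k ≤ 2 * n + 1) :
    (A2nConductor n k : Set (PowerSeries ℂ))
        = ((Ideal.span {PowerSeries.X ^ (k - 1)} : Ideal (PowerSeries ℂ)) :
            Set (PowerSeries ℂ)) ∧
    FiniteDimensional ℂ (PowerSeries ℂ ⧸ A2nConductor n k) ∧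
    Module.finrank ℂ (PowerSeries ℂ ⧸ A2nConductor n k) = k - 1 := by
  have hset : ∀ u : PowerSeries ℂ, u ∈ A2nConductor n k ↔
      ∀ m : ℕ, m < k - 1 → PowerSeries.coeff m u = 0 :=
    fun u => mem_A2nConductor_iff n k hodd hk1 hk2 u
  have hker : A2nConductor n k = LinearMap.ker (coeffMap (k - 1)) := by
    ext u
    rw [hset u, LinearMap.mem_ker]
    constructor
    · intro h
      funext i
      exact h i i.isLt
    · intro h m hm
      exact congrFun h ⟨m, hm⟩
  refine ⟨?_, ?_⟩
  · ext u
    simp only [SetLike.mem_coe, hset u, Ideal.mem_span_singleton,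
      PowerSeries.X_pow_dvd_iff]
  · have e : (PowerSeries ℂ ⧸ A2nConductor n k) ≃ₗ[ℂ] (Fin (k - 1) → ℂ) :=
      (Submodule.quotEquivOfEq _ _ hker).trans
        ((coeffMap (k - 1)).quotKerEquivOfSurjective (coeffMap_surjective (k - 1)))
    have : FiniteDimensional ℂ (PowerSeries ℂ ⧸ A2nConductor n k) :=
      Module.Finite.equiv e.symm
    exact ⟨this, by rw [e.finrank_eq, Module.finrank_fin_fun]⟩
end

section
/- Let ℂ[[t]] be the ring of formal power series over ℂ, let n ≥ 1 be an integer, let R = {(f, g) ∈ ℂ[[t]] × ℂ[[t]] : the coefficients of t^i in f and in g agree for every i < n}, and for 0 ≤ k ≤ n let M_k = R + R·(t^k, 0) ⊆ ℂ[[t]] × ℂ[[t]]. Then the quotient ℂ-vector space M_k / R is finite dimensional of dimension n − k. -/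
/-- `R`, the complete local ring of an `A_{2n−1}` singularity, as a ℂ-subspace of its
normalization `ℂ[[t]] × ℂ[[t]]`. -/
noncomputable def A2nm1Ring (n : ℕ) : Submodule ℂ (PowerSeries ℂ × PowerSeries ℂ) where
  carrier := {f : PowerSeries ℂ × PowerSeries ℂ |
    ∀ i : ℕ, i < n → PowerSeries.coeff i f.1 = PowerSeries.coeff i f.2}
  add_mem' := by
    intro a b ha hb
    simp only [Set.mem_setOf_eq] at *
    intro i hlt
    simp only [Prod.fst_add, Prod.snd_add, map_add, ha i hlt, hb i hlt]
  zero_mem' := by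
    simp only [Set.mem_setOf_eq]
    intro i hlt
    simp
  smul_mem' := by
    intro c f hf
    simp only [Set.mem_setOf_eq] at *
    intro i hlt
    simp only [Prod.smul_fst, Prod.smul_snd, map_smul, hf i hlt]

/-- The module `M_k = R + R·(t^k, 0)` as a ℂ-subspace of `ℂ[[t]] × ℂ[[t]]`. -/
noncomputable def A2nm1Module (n k : ℕ) : Submodule ℂ (PowerSeries ℂ × PowerSeries ℂ) :=
  A2nm1Ring n ⊔ (A2nm1Ring n).map (LinearMap.mulRight ℂ ((PowerSeries.X ^ k, 0) :
    PowerSeries ℂ × PowerSeries ℂ))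

lemma mem_A2nm1Ring {n : ℕ} {f : PowerSeries ℂ × PowerSeries ℂ} :
    f ∈ A2nm1Ring n ↔ ∀ i : ℕ, i < n → PowerSeries.coeff i f.1 = PowerSeries.coeff i f.2 :=
  Iff.rfl

lemma A2nm1Module_eq (n k : ℕ) (hk : k ≤ n) : A2nm1Module n k = A2nm1Ring k := by
  ext x
  constructor
  · intro hx
    rcases Submodule.mem_sup.1 hx with ⟨a, ha, b, hb, hab⟩
    rcases hb with ⟨m, hm, rfl⟩
    intro i hi
    subst hab
    have h1 : PowerSeries.coeff i (m.1 * PowerSeries.X ^ k) = 0 := by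
      rw [PowerSeries.coeff_mul_X_pow', if_neg (by omega)]
    simp only [LinearMap.mulRight_apply, Prod.mk_mul_mk, mul_zero, Prod.fst_add, Prod.snd_add,
      Prod.fst_mul, Prod.snd_mul, map_add]
    rw [h1, map_zero, add_zero, add_zero]
    exact ha i (lt_of_lt_of_le hi hk)
  · intro hx
    have hdvd : (PowerSeries.X : PowerSeries ℂ) ^ k ∣ (x.1 - x.2) := by
      rw [PowerSeries.X_pow_dvd_iff]
      intro m hm
      rw [map_sub, hx m hm, sub_self]
    rcases hdvd with ⟨c, hc⟩
    refine Submodule.mem_sup.2 ⟨(x.2, x.2), fun i _ => rfl, (c * PowerSeries.X ^ k, 0),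
      ⟨(c, c), fun i _ => rfl, ?_⟩, ?_⟩
    · simp [Prod.ext_iff]
    · apply Prod.ext
      · show x.2 + c * PowerSeries.X ^ k = x.1
        linear_combination -hc
      · show x.2 + 0 = x.2
        rw [add_zero]

noncomputable def coeffDiff (n k : ℕ) :
    (PowerSeries ℂ × PowerSeries ℂ) →ₗ[ℂ] (Fin (n - k) → ℂ) where
  toFun f j := PowerSeries.coeff (k + j) f.1 - PowerSeries.coeff (k + j) f.2
  map_add' a b := by funext j; simp; ring
  map_smul' c f := by funext j; simp; ring

lemma coeffDiff_surj (n k : ℕ) :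
    Function.Surjective ((coeffDiff n k).comp (A2nm1Ring k).subtype) := by
  intro v
  set f : PowerSeries ℂ := ∑ j : Fin (n - k), PowerSeries.monomial (k + j) (v j) with hf
  have hmem : ((f, 0) : PowerSeries ℂ × PowerSeries ℂ) ∈ A2nm1Ring k := by
    intro i hi
    simp only [hf, map_sum, map_zero]
    rw [Finset.sum_eq_zero]
    intro j _
    rw [PowerSeries.coeff_monomial, if_neg (by omega)]
  refine ⟨⟨(f, 0), hmem⟩, ?_⟩
  funext j
  simp only [LinearMap.comp_apply, Submodule.subtype_apply, coeffDiff, LinearMap.coe_mk,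
    AddHom.coe_mk, map_zero, sub_zero, hf, map_sum, PowerSeries.coeff_monomial]
  simp [Fin.val_inj]


/-- For `0 ≤ k ≤ n`, the quotient `M_k / R` is a finite-dimensional ℂ-vector space of
dimension `n − k`. -/
theorem A2nm1_quotient_finrank (n k : ℕ) (hn : 1 ≤ n) (hk : k ≤ n) :
    FiniteDimensional ℂ
      (↥(A2nm1Module n k) ⧸ Submodule.comap (A2nm1Module n k).subtype (A2nm1Ring n)) ∧
    Module.finrank ℂ
      (↥(A2nm1Module n k) ⧸ Submodule.comap (A2nm1Module n k).subtype (A2nm1Ring n))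
        = n - k := by
  rw [A2nm1Module_eq n k hk]
  set φ := (coeffDiff n k).comp (A2nm1Ring k).subtype with hφ
  have hker : LinearMap.ker φ = Submodule.comap (A2nm1Ring k).subtype (A2nm1Ring n) := by
    ext ⟨x, hx⟩
    simp only [LinearMap.mem_ker, Submodule.mem_comap, Submodule.subtype_apply]
    constructor
    · intro h i hi
      by_cases hik : i < k
      · exact hx i hik
      · have hj : i - k < n - k := by omega
        have := congrFun h ⟨i - k, hj⟩
        simp only [hφ, LinearMap.comp_apply, Submodule.subtype_apply, coeffDiff,
          LinearMap.coe_mk, AddHom.coe_mk] at this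
        have hik' : k + (i - k) = i := by omega
        rw [hik', Pi.zero_apply] at this
        exact sub_eq_zero.1 this
    · intro h
      funext j
      simp only [hφ, LinearMap.comp_apply, Submodule.subtype_apply, coeffDiff,
        LinearMap.coe_mk, AddHom.coe_mk, Pi.zero_apply]
      rw [h (k + j) (by omega), sub_self]
  have e := φ.quotKerEquivOfSurjective (coeffDiff_surj n k)
  rw [hker] at e
  constructor
  · exact Module.Finite.equiv e.symm
  · rw [e.finrank_eq, Module.finrank_fin_fun]
end

section
/- Let ℂ[[t]] be the ring of formal power series over ℂ, let n ≥ 1 be an integer, let R = {(f, g) ∈ ℂ[[t]] × ℂ[[t]] : the coefficients of t^i in f and in g agree for every i < n}, and for 0 ≤ k ≤ n let M_k = R + R·(t^k, 0) ⊆ ℂ[[t]] × ℂ[[t]]. Then the conductor C(M_k) = {u ∈ ℂ[[t]] × ℂ[[t]] : u·w ∈ M_k for every w ∈ ℂ[[t]] × ℂ[[t]]} equals t^kℂ[[t]] × t^kℂ[[t]], the ideal of ℂ[[t]] × ℂ[[t]] generated by (t^k, t^k), and the quotient (ℂ[[t]] × ℂ[[t]]) / C(M_k) is a ℂ-vector space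 of dimension 2k. -/
/-- The conductor `C(M_k) = {u : u·w ∈ M_k for all w}` as a ℂ-subspace. -/
noncomputable def A2nm1Conductor (n k : ℕ) : Submodule ℂ (PowerSeries ℂ × PowerSeries ℂ) where
  carrier := {u : PowerSeries ℂ × PowerSeries ℂ |
    ∀ w : PowerSeries ℂ × PowerSeries ℂ, u * w ∈ A2nm1Module n k}
  add_mem' := by
    intro a b ha hb
    simp only [Set.mem_setOf_eq] at *
    intro w
    rw [add_mul]
    exact (A2nm1Module n k).add_mem (ha w) (hb w)
  zero_mem' := by
    simp only [Set.mem_setOf_eq]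
    intro w
    rw [zero_mul]
    exact (A2nm1Module n k).zero_mem
  smul_mem' := by
    intro c u hu
    simp only [Set.mem_setOf_eq] at *
    intro w
    rw [smul_mul_assoc]
    exact (A2nm1Module n k).smul_mem c (hu w)


lemma mem_A2nm1Module_iff (n k : ℕ) (hk : k ≤ n) (u : PowerSeries ℂ × PowerSeries ℂ) :
    u ∈ A2nm1Module n k ↔ ∀ i : ℕ, i < k → PowerSeries.coeff i u.1 = PowerSeries.coeff i u.2 := by
  constructor
  · intro hu
    rw [A2nm1Module, Submodule.mem_sup] at hu
    obtain ⟨y, hy, z, hz, rfl⟩ := hu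
    obtain ⟨s, hs, rfl⟩ := hz
    intro i hi
    have h1 : PowerSeries.coeff i ((s * (PowerSeries.X ^ k, (0 : PowerSeries ℂ))).1) = 0 := by
      have : (PowerSeries.X : PowerSeries ℂ) ^ k ∣ s.1 * PowerSeries.X ^ k := ⟨s.1, mul_comm _ _⟩
      rw [PowerSeries.X_pow_dvd_iff] at this
      exact this i hi
    have h2 : ((s * (PowerSeries.X ^ k, (0 : PowerSeries ℂ))).2) = 0 := by
      simp [Prod.snd_mul]
    simp only [LinearMap.mulRight_apply] at h1 h2 ⊢
    simp only [Prod.fst_add, Prod.snd_add, map_add, h1, h2, map_zero, add_zero]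
    exact hy i (lt_of_lt_of_le hi hk)
  · intro h
    have hdvd : (PowerSeries.X : PowerSeries ℂ) ^ k ∣ u.1 - u.2 := by
      rw [PowerSeries.X_pow_dvd_iff]
      intro m hm
      simp [h m hm]
    obtain ⟨c, hc⟩ := hdvd
    rw [A2nm1Module, Submodule.mem_sup]
    refine ⟨(u.2, u.2), fun i _ => rfl, (c * PowerSeries.X ^ k, 0), ⟨(c, c), fun i _ => rfl, ?_⟩, ?_⟩
    · simp [LinearMap.mulRight_apply, Prod.ext_iff, mul_comm]
    · refine Prod.ext ?_ (by simp)
      show u.2 + c * PowerSeries.X ^ k = u.1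
      linear_combination -hc

lemma mem_A2nm1Conductor_iff (n k : ℕ) (hk : k ≤ n) (u : PowerSeries ℂ × PowerSeries ℂ) :
    u ∈ A2nm1Conductor n k ↔
      (∀ i : ℕ, i < k → PowerSeries.coeff i u.1 = 0) ∧
      (∀ i : ℕ, i < k → PowerSeries.coeff i u.2 = 0) := by
  constructor
  · intro hu
    constructor
    · intro i hi
      have := (mem_A2nm1Module_iff n k hk _).mp (hu (1, 0)) i hi
      simpa using this
    · intro i hi
      have := (mem_A2nm1Module_iff n k hk _).mp (hu (0, 1)) i hi
      simpa using this.symm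
  · rintro ⟨h1, h2⟩ w
    rw [mem_A2nm1Module_iff n k hk]
    intro i hi
    have d1 : (PowerSeries.X : PowerSeries ℂ) ^ k ∣ u.1 * w.1 :=
      Dvd.dvd.mul_right (by rw [PowerSeries.X_pow_dvd_iff]; exact h1) _
    have d2 : (PowerSeries.X : PowerSeries ℂ) ^ k ∣ u.2 * w.2 :=
      Dvd.dvd.mul_right (by rw [PowerSeries.X_pow_dvd_iff]; exact h2) _
    rw [PowerSeries.X_pow_dvd_iff] at d1 d2
    simp only [Prod.fst_mul, Prod.snd_mul]
    rw [d1 i hi, d2 i hi]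

noncomputable def truncPairMap (k : ℕ) :
    (PowerSeries ℂ × PowerSeries ℂ) →ₗ[ℂ] ((Fin k → ℂ) × (Fin k → ℂ)) where
  toFun u := (fun i => PowerSeries.coeff i u.1, fun i => PowerSeries.coeff i u.2)
  map_add' a b := by
    refine Prod.ext ?_ ?_ <;> funext i <;> simp
  map_smul' c a := by
    refine Prod.ext ?_ ?_ <;> funext i <;> simp

/-- For `0 ≤ k ≤ n`, the conductor `C(M_k)` equals `t^k ℂ[[t]] × t^k ℂ[[t]]`, the ideal of
`ℂ[[t]] × ℂ[[t]]` generated by `(t^k, t^k)`, and the quotient `(ℂ[[t]] × ℂ[[t]]) / C(M_k)`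
has ℂ-dimension `2k`. -/
theorem A2nm1_conductor_eq (n k : ℕ) (hn : 1 ≤ n) (hk : k ≤ n) :
    (A2nm1Conductor n k : Set (PowerSeries ℂ × PowerSeries ℂ))
        = ((Ideal.span {PowerSeries.X ^ k} : Ideal (PowerSeries ℂ)) : Set (PowerSeries ℂ)) ×ˢ
          ((Ideal.span {PowerSeries.X ^ k} : Ideal (PowerSeries ℂ)) : Set (PowerSeries ℂ)) ∧
    (A2nm1Conductor n k : Set (PowerSeries ℂ × PowerSeries ℂ))
        = ((Ideal.span {((PowerSeries.X ^ k, PowerSeries.X ^ k) :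
              PowerSeries ℂ × PowerSeries ℂ)} : Ideal (PowerSeries ℂ × PowerSeries ℂ)) :
            Set (PowerSeries ℂ × PowerSeries ℂ)) ∧
    FiniteDimensional ℂ ((PowerSeries ℂ × PowerSeries ℂ) ⧸ A2nm1Conductor n k) ∧
    Module.finrank ℂ ((PowerSeries ℂ × PowerSeries ℂ) ⧸ A2nm1Conductor n k) = 2 * k := by
  have hchar : ∀ u : PowerSeries ℂ × PowerSeries ℂ, u ∈ A2nm1Conductor n k ↔
      (∀ i : ℕ, i < k → PowerSeries.coeff i u.1 = 0) ∧
      (∀ i : ℕ, i < k → PowerSeries.coeff i u.2 = 0) := mem_A2nm1Conductor_iff n k hk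
  have hset : (A2nm1Conductor n k : Set (PowerSeries ℂ × PowerSeries ℂ))
      = ((Ideal.span {PowerSeries.X ^ k} : Ideal (PowerSeries ℂ)) : Set (PowerSeries ℂ)) ×ˢ
        ((Ideal.span {PowerSeries.X ^ k} : Ideal (PowerSeries ℂ)) : Set (PowerSeries ℂ)) := by
    ext u
    rw [Set.mem_prod, SetLike.mem_coe, SetLike.mem_coe, SetLike.mem_coe, hchar,
      Ideal.mem_span_singleton, Ideal.mem_span_singleton,
      PowerSeries.X_pow_dvd_iff, PowerSeries.X_pow_dvd_iff]
  refine ⟨hset, ?_, ?_⟩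
  · rw [hset]
    ext u
    simp only [Set.mem_prod, SetLike.mem_coe, Ideal.mem_span_singleton]
    constructor
    · rintro ⟨⟨a, ha⟩, ⟨b, hb⟩⟩
      exact ⟨(a, b), Prod.ext (by simp [ha]) (by simp [hb])⟩
    · rintro ⟨⟨a, b⟩, h⟩
      rw [Prod.ext_iff] at h
      exact ⟨⟨a, h.1⟩, ⟨b, h.2⟩⟩
  · have hker : LinearMap.ker (truncPairMap k) = A2nm1Conductor n k := by
      ext u
      rw [LinearMap.mem_ker, hchar]
      constructor
      · intro h
        rw [Prod.ext_iff] at h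
        constructor
        · intro i hi
          have := congrFun h.1 ⟨i, hi⟩
          simpa [truncPairMap] using this
        · intro i hi
          have := congrFun h.2 ⟨i, hi⟩
          simpa [truncPairMap] using this
      · rintro ⟨h1, h2⟩
        refine Prod.ext ?_ ?_ <;> funext i
        · exact h1 i i.2
        · exact h2 i i.2
    have hsurj : Function.Surjective (truncPairMap k) := by
      rintro ⟨a, b⟩
      refine ⟨(PowerSeries.mk fun i => if h : i < k then a ⟨i, h⟩ else 0,
        PowerSeries.mk fun i => if h : i < k then b ⟨i, h⟩ else 0), ?_⟩
      refine Prod.ext ?_ ?_ <;> funext i <;>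
        simp [truncPairMap, PowerSeries.coeff_mk, i.2]
    have e : ((PowerSeries ℂ × PowerSeries ℂ) ⧸ A2nm1Conductor n k) ≃ₗ[ℂ]
        ((Fin k → ℂ) × (Fin k → ℂ)) :=
      (Submodule.quotEquivOfEq _ _ hker.symm).trans
        ((truncPairMap k).quotKerEquivOfSurjective hsurj)
    have : FiniteDimensional ℂ ((PowerSeries ℂ × PowerSeries ℂ) ⧸ A2nm1Conductor n k) :=
      Module.Finite.equiv e.symm
    refine ⟨this, ?_⟩
    rw [e.finrank_eq, Module.finrank_prod, Module.finrank_pi, Fintype.card_fin]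
    ring
end
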